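/- Let α be a unital partial action of a group G on a unital K-algebra A, where each ideal D_g equals 1_g·A for a central idempotent 1_g. Then the map π^α : G → End_K(A) given by π^α_g(a) = α_g(1_{g⁻¹} a) is a partial representation of G, i.e. π^α_1 = id, π^α_{g⁻¹} π^α_g π^α_h = π^α_{g⁻¹} π^α_{gh}, and π^α_g π^α_h π^α_{h⁻¹} = π^α_{gh} π^α_{h⁻¹} for all g, h ∈ G. -/
import Mathlib


/-- Let `α` be a unital partial action of a group `G` on a unital `K`-algebra `A`, with
ideals `D_g = e_g·A` for central idempotents `e_g` (here `act g` denotes `α_g`, applied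
via `a ↦ act g (e g⁻¹ * a)`).  Then `π^α_g(a) = α_g(e_{g⁻¹} a)` defines a partial
representation `G → End_K(A)`: each `π^α_g` is `K`-linear, `π^α_1 = id`,
`π^α_{g⁻¹} π^α_g π^α_h = π^α_{g⁻¹} π^α_{gh}` and `π^α_g π^α_h π^α_{h⁻¹} = π^α_{gh} π^α_{h⁻¹}`. -/
theorem piAlpha_isPartialRepresentation
    {K : Type*} [CommRing K] {A : Type*} [Ring A] [Algebra K A]
    {G : Type*} [Group G]
    (e : G → A) (act : G → A → A)
    (he_central : ∀ g a, e g * a = a * e g)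
    (he_idem : ∀ g, e g * e g = e g)
    (he_one : e 1 = 1)
    (hact_one : ∀ a, act 1 a = a)
    (hrange : ∀ g a, e g * act g (e g⁻¹ * a) = act g (e g⁻¹ * a))
    (hadd : ∀ g a b, act g (e g⁻¹ * a + e g⁻¹ * b) = act g (e g⁻¹ * a) + act g (e g⁻¹ * b))
    (hsmul : ∀ g (k : K) a, act g (k • (e g⁻¹ * a)) = k • act g (e g⁻¹ * a))
    (hmul : ∀ g a b, act g ((e g⁻¹ * a) * (e g⁻¹ * b)) = act g (e g⁻¹ * a) * act g (e g⁻¹ * b))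
    (hbij : ∀ g, Set.BijOn (act g) {x | e g⁻¹ * x = x} {x | e g * x = x})
    (hcomp : ∀ g h a, e h⁻¹ * a = a → e g⁻¹ * act h a = act h a →
      e (g * h)⁻¹ * a = a ∧ act g (act h a) = act (g * h) a) :
    (∀ g : G, IsLinearMap K (fun a : A => act g (e g⁻¹ * a))) ∧
    (∀ a : A, act 1 (e 1⁻¹ * a) = a) ∧
    (∀ (g h : G) (a : A),
      act g⁻¹ (e (g⁻¹)⁻¹ * act g (e g⁻¹ * act h (e h⁻¹ * a))) =
        act g⁻¹ (e (g⁻¹)⁻¹ * act (g * h) (e (g * h)⁻¹ * a))) ∧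
    (∀ (g h : G) (a : A),
      act g (e g⁻¹ * act h (e h⁻¹ * act h⁻¹ (e (h⁻¹)⁻¹ * a))) =
        act (g * h) (e (g * h)⁻¹ * act h⁻¹ (e (h⁻¹)⁻¹ * a))) := by
  -- basic idempotent algebra
  have hswap : ∀ (g h : G) (a : A), e g * (e h * a) = e h * (e g * a) := by
    intro g h a
    rw [← mul_assoc, he_central g (e h), mul_assoc]
  have habs : ∀ (g : G) (a : A), e g * (e g * a) = e g * a := by
    intro g a
    rw [← mul_assoc, he_idem]
  have hsplit : ∀ (g : G) (x y : A), (e g * x) * (e g * y) = e g * (x * y) := by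
    intro g x y
    rw [mul_assoc, ← mul_assoc x (e g) y, ← he_central g x, mul_assoc (e g) x y, habs]
  -- key composition lemma (L7)
  have hL7 : ∀ (g h : G) (x : A), e h⁻¹ * x = x → e (g * h)⁻¹ * x = x →
      e g⁻¹ * act h x = act h x ∧ act g (act h x) = act (g * h) x := by
    intro g h x hx1 hx2
    have hy : e h * act h x = act h x := by
      have := hrange h x
      rwa [hx1] at this
    have hy' : e (h⁻¹)⁻¹ * act h x = act h x := by rwa [inv_inv]
    have hinv : act h⁻¹ (act h x) = x := by
      have := (hcomp h⁻¹ h x hx1 hy').2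
      rwa [inv_mul_cancel, hact_one] at this
    have hx2' : e (g * h)⁻¹ * act h⁻¹ (act h x) = act h⁻¹ (act h x) := by rwa [hinv]
    have h2 := hcomp (g * h) h⁻¹ (act h x) hy' hx2'
    constructor
    · have := h2.1
      rwa [mul_inv_cancel_right] at this
    · have := h2.2
      rw [hinv, mul_inv_cancel_right] at this
      exact this.symm
  -- the translated idempotent identity (E)
  have hE : ∀ (g h : G), act (g * h) (e (g * h)⁻¹ * e h⁻¹) = e g * e (g * h) := by
    intro g h
    have ht1 : e h⁻¹ * (e (g * h)⁻¹ * e h⁻¹) = e (g * h)⁻¹ * e h⁻¹ := by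
      rw [hswap, he_idem]
    have ht2 : e (g * h)⁻¹ * (e (g * h)⁻¹ * e h⁻¹) = e (g * h)⁻¹ * e h⁻¹ := habs _ _
    obtain ⟨htd, htc⟩ := hL7 g h (e (g * h)⁻¹ * e h⁻¹) ht1 ht2
    have hs_g : e g * act (g * h) (e (g * h)⁻¹ * e h⁻¹) = act (g * h) (e (g * h)⁻¹ * e h⁻¹) := by
      have := hrange g (act h (e (g * h)⁻¹ * e h⁻¹))
      rwa [htd, htc] at this
    have hs_gh : e (g * h) * act (g * h) (e (g * h)⁻¹ * e h⁻¹)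
        = act (g * h) (e (g * h)⁻¹ * e h⁻¹) := hrange (g * h) (e h⁻¹)
    have hv_g : e g * (e g * e (g * h)) = e g * e (g * h) := habs _ _
    have hv_gh : e (g * h) * (e g * e (g * h)) = e g * e (g * h) := by
      rw [hswap, he_idem]
    have hq := hL7 (g * h) (g * h)⁻¹ (e g * e (g * h))
      (by rwa [inv_inv]) (by simp only [mul_inv_cancel, inv_one, he_one, one_mul])
    have hq2 : act (g * h) (act (g * h)⁻¹ (e g * e (g * h))) = e g * e (g * h) := by
      have := hq.2
      rwa [mul_inv_cancel, hact_one] at this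
    have hq3 : e h⁻¹ * act (g * h)⁻¹ (e g * e (g * h)) = act (g * h)⁻¹ (e g * e (g * h)) := by
      have h7 := hL7 h⁻¹ g⁻¹ (e g * e (g * h)) (by rwa [inv_inv])
        (by simp only [mul_inv_rev, inv_inv]; exact hv_gh)
      have hr := hrange h⁻¹ (act g⁻¹ (e g * e (g * h)))
      rw [h7.1, h7.2] at hr
      rwa [← mul_inv_rev] at hr
    have key : act (g * h) (e (g * h)⁻¹ * e h⁻¹) * (e g * e (g * h)) = e g * e (g * h) := by
      conv_lhs => rw [← hq2, ← hq.1]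
      rw [← hmul, hsplit, hq3, hq.1]
      exact hq2
    calc act (g * h) (e (g * h)⁻¹ * e h⁻¹)
        = e g * (e (g * h) * act (g * h) (e (g * h)⁻¹ * e h⁻¹)) := by rw [hs_gh, hs_g]
      _ = act (g * h) (e (g * h)⁻¹ * e h⁻¹) * (e g * e (g * h)) := by
          rw [he_central (g * h) (act (g * h) (e (g * h)⁻¹ * e h⁻¹)), ← mul_assoc,
            he_central g (act (g * h) (e (g * h)⁻¹ * e h⁻¹)), mul_assoc]
      _ = e g * e (g * h) := key
  -- the other translated idempotent identity
  have hE2 : ∀ (g h : G), act g (e g⁻¹ * e h) = e (g * h) * e g := by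
    intro g h
    have := hE (g * h) h⁻¹
    rwa [mul_inv_cancel_right, inv_inv] at this
  -- the core identity (C): e g * π_{gh} a = π_g (π_h a)
  have hC : ∀ (g h : G) (a : A),
      e g * act (g * h) (e (g * h)⁻¹ * a) = act g (e g⁻¹ * act h (e h⁻¹ * a)) := by
    intro g h a
    have hx1 : e h⁻¹ * (e (g * h)⁻¹ * (e h⁻¹ * a)) = e (g * h)⁻¹ * (e h⁻¹ * a) := by
      rw [hswap, habs]
    have hx2 : e (g * h)⁻¹ * (e (g * h)⁻¹ * (e h⁻¹ * a)) = e (g * h)⁻¹ * (e h⁻¹ * a) :=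
      habs _ _
    obtain ⟨hxd, hxc⟩ := hL7 g h (e (g * h)⁻¹ * (e h⁻¹ * a)) hx1 hx2
    have E1 : act h (e (g * h)⁻¹ * (e h⁻¹ * a)) =
        act h (e h⁻¹ * e (g * h)⁻¹) * act h (e h⁻¹ * a) := by
      rw [← hmul h (e (g * h)⁻¹) a, hsplit, hswap h⁻¹ ((g * h)⁻¹) a]
    have htt1 : e h⁻¹ * (e h⁻¹ * e (g * h)⁻¹) = e h⁻¹ * e (g * h)⁻¹ := habs _ _
    have htt2 : e (g * h)⁻¹ * (e h⁻¹ * e (g * h)⁻¹) = e h⁻¹ * e (g * h)⁻¹ := by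
      rw [hswap, he_idem]
    obtain ⟨httd, httc⟩ := hL7 g h (e h⁻¹ * e (g * h)⁻¹) htt1 htt2
    have hgtt : act g (e g⁻¹ * act h (e h⁻¹ * e (g * h)⁻¹)) = e g * e (g * h) := by
      rw [httd, httc, he_central h⁻¹ (e (g * h)⁻¹), hE]
    have hRHS : act g (e g⁻¹ * act h (e h⁻¹ * a)) =
        (e g * e (g * h)) * act g (e g⁻¹ * act h (e h⁻¹ * a)) := by
      conv_lhs => rw [← hrange h a, ← hsplit, hmul g (e h) (act h (e h⁻¹ * a)), hE2,
        he_central (g * h) (e g)]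
    calc e g * act (g * h) (e (g * h)⁻¹ * a)
        = (e g * e (g * h)) * act (g * h) (e (g * h)⁻¹ * a) := by
          rw [mul_assoc, hrange (g * h) a]
      _ = act (g * h) (e (g * h)⁻¹ * e h⁻¹) * act (g * h) (e (g * h)⁻¹ * a) := by rw [hE]
      _ = act (g * h) ((e (g * h)⁻¹ * e h⁻¹) * (e (g * h)⁻¹ * a)) :=
          (hmul (g * h) (e h⁻¹) a).symm
      _ = act (g * h) (e (g * h)⁻¹ * (e h⁻¹ * a)) := by rw [hsplit]
      _ = act g (act h (e (g * h)⁻¹ * (e h⁻¹ * a))) := hxc.symm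
      _ = act g (e g⁻¹ * act h (e (g * h)⁻¹ * (e h⁻¹ * a))) := by rw [hxd]
      _ = act g (e g⁻¹ * (act h (e h⁻¹ * e (g * h)⁻¹) * act h (e h⁻¹ * a))) := by rw [E1]
      _ = act g ((e g⁻¹ * act h (e h⁻¹ * e (g * h)⁻¹)) * (e g⁻¹ * act h (e h⁻¹ * a))) := by
          rw [hsplit]
      _ = act g (e g⁻¹ * act h (e h⁻¹ * e (g * h)⁻¹)) * act g (e g⁻¹ * act h (e h⁻¹ * a)) :=
          hmul g _ _
      _ = (e g * e (g * h)) * act g (e g⁻¹ * act h (e h⁻¹ * a)) := by rw [hgtt]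
      _ = act g (e g⁻¹ * act h (e h⁻¹ * a)) := hRHS.symm
  -- domain absorption: if c ∈ D_{h⁻¹} then π_{gh} c ∈ D_g
  have hD : ∀ (g h : G) (c : A), e h⁻¹ * c = c →
      e g * act (g * h) (e (g * h)⁻¹ * c) = act (g * h) (e (g * h)⁻¹ * c) := by
    intro g h c hc
    have h1 : e (g * h)⁻¹ * (e (g * h)⁻¹ * c) = e (g * h)⁻¹ * c := habs _ _
    have h2 : e (g⁻¹ * (g * h))⁻¹ * (e (g * h)⁻¹ * c) = e (g * h)⁻¹ * c := by
      rw [inv_mul_cancel_left, hswap, hc]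
    have := (hL7 g⁻¹ (g * h) (e (g * h)⁻¹ * c) h1 h2).1
    rwa [inv_inv] at this
  refine ⟨?_, ?_, ?_, ?_⟩
  · intro g
    constructor
    · intro x y
      show act g (e g⁻¹ * (x + y)) = act g (e g⁻¹ * x) + act g (e g⁻¹ * y)
      rw [mul_add]
      exact hadd g x y
    · intro k x
      show act g (e g⁻¹ * (k • x)) = k • act g (e g⁻¹ * x)
      rw [mul_smul_comm]
      exact hsmul g k x
  · intro a
    rw [inv_one, he_one, one_mul, hact_one]
  · intro g h a
    simp only [inv_inv]
    rw [hrange g (act h (e h⁻¹ * a)), hC g h a]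
  · intro g h a
    rw [← hC g h (act h⁻¹ (e (h⁻¹)⁻¹ * a))]
    exact hD g h (act h⁻¹ (e (h⁻¹)⁻¹ * a)) (hrange h⁻¹ a)
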